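/- There is an absolute constant C such that for all integers d ≥ 2, m ≥ 2, every d-tuple I = I_0×⋯×I_{d−1} of nonempty integer intervals with each I_j ⊆ [−m,m], every prime p, every integer k ≥ 1 and every integer r, one has | #{f ∈ E^{(1)}(m,d,I) : f(r) ≡ 0 (mod p^k)} − |I|/p^k | ≤ C·d·|I|/min_j #I_j, where |I| = ∏_j #I_j. -/

import Mathlib

open Polynomial Finset in
/-- The binary form associated to an integer polynomial `f`. -/
noncomputable def binForm (f : Polynomial ℤ) (x y : ℤ) : ℤ :=
  ∑ i ∈ Finset.range (f.natDegree + 1), f.coeff i * x ^ i * y ^ (f.natDegree - i)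

open scoped Classical in
/-- `n_{p^k}(f)`. -/
noncomputable def nRoots (f : Polynomial ℤ) (p k : ℕ) : ℕ :=
  ((Finset.range (p ^ k)).filter fun a => (p : ℤ) ^ k ∣ f.eval (a : ℤ)).card +
  ((Finset.range (p ^ k)).filter fun b => p ∣ b ∧ (p : ℤ) ^ k ∣ binForm f 1 (b : ℤ)).card

/-- The Sylvester matrix of two integer polynomials. -/
noncomputable def sylvesterMatrix (f g : Polynomial ℤ) :
    Matrix (Fin (f.natDegree + g.natDegree)) (Fin (f.natDegree + g.natDegree)) ℤ :=
  Matrix.of fun i j =>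
    if (i : ℕ) < g.natDegree then
      if (i : ℕ) ≤ (j : ℕ) ∧ (j : ℕ) ≤ (i : ℕ) + f.natDegree then
        f.coeff (f.natDegree + i - j)
      else 0
    else
      if (i : ℕ) - g.natDegree ≤ (j : ℕ) ∧ (j : ℕ) ≤ (i : ℕ) - g.natDegree + g.natDegree then
        g.coeff (g.natDegree + ((i : ℕ) - g.natDegree) - j)
      else 0

/-- The resultant of two integer polynomials. -/
noncomputable def resultant (f g : Polynomial ℤ) : ℤ := (sylvesterMatrix f g).det

/-- The discriminant of an integer polynomial. -/
noncomputable def disc (f : Polynomial ℤ) : ℤ :=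
  ((-1) ^ (f.natDegree * (f.natDegree - 1) / 2) *
    resultant f (Polynomial.derivative f)) / f.leadingCoeff

/-- Murphy's `α_p(f)`. -/
noncomputable def alphaP (f : Polynomial ℤ) (p : ℕ) : ℝ :=
  Real.log p * (1 / ((p : ℝ) - 1) -
    ((p : ℝ) / ((p : ℝ) + 1)) * ∑' k : ℕ, (nRoots f p (k + 1) : ℝ) / (p : ℝ) ^ (k + 1))

/-- The monic integer polynomial `X^d + Σ_{i<d} c_i X^i`. -/
noncomputable def monicPoly (d : ℕ) (c : Fin d → ℤ) : Polynomial ℤ :=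
  Polynomial.X ^ d + ∑ i : Fin d, Polynomial.C (c i) * Polynomial.X ^ (i : ℕ)

open scoped Classical in
/-- The set `E^{(1)}(m,d,I)` of (coefficient tuples of) monic polynomials of degree `d` with
`i`-th coefficient in the interval `[lo i, hi i]` and nonzero discriminant. -/
noncomputable def Eset (d : ℕ) (lo hi : Fin d → ℤ) : Finset (Fin d → ℤ) :=
  (Fintype.piFinset fun j => Finset.Icc (lo j) (hi j)).filter
    fun c => disc (monicPoly d c) ≠ 0

-- ===================== auxiliary lemmas =====================
open Polynomial Finset

lemma degree_sum_lt {d : ℕ} (hd : 1 ≤ d) (c : Fin d → ℤ) :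
    (∑ i : Fin d, C (c i) * X ^ (i : ℕ)).degree < ((d : ℕ) : WithBot ℕ) := by
  refine lt_of_le_of_lt (degree_sum_le _ _) ?_
  rw [Finset.sup_lt_iff (by exact_mod_cast WithBot.bot_lt_coe d)]
  intro i _
  exact lt_of_le_of_lt (degree_C_mul_X_pow_le _ _) (by exact_mod_cast i.2)

lemma monic_monicPoly {d : ℕ} (hd : 1 ≤ d) (c : Fin d → ℤ) : (monicPoly d c).Monic :=
  monic_X_pow_add (degree_sum_lt hd c)

lemma natDegree_monicPoly {d : ℕ} (hd : 1 ≤ d) (c : Fin d → ℤ) :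
    (monicPoly d c).natDegree = d := by
  have h := degree_sum_lt hd c
  have : (monicPoly d c).degree = d := by
    rw [monicPoly, degree_add_eq_left_of_degree_lt (by rwa [degree_X_pow]), degree_X_pow]
  exact natDegree_eq_of_degree_eq_some this

lemma eval_monicPoly {d : ℕ} (c : Fin d → ℤ) (r : ℤ) :
    (monicPoly d c).eval r = r ^ d + ∑ i : Fin d, c i * r ^ (i : ℕ) := by
  simp [monicPoly, eval_finset_sum]

lemma monicPoly_cons {n : ℕ} (x : ℤ) (t : Fin n → ℤ) :
    monicPoly (n + 1) (Fin.cons x t) = monicPoly (n + 1) (Fin.cons 0 t) + C x := by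
  simp only [monicPoly, Fin.sum_univ_succ, Fin.cons_zero, Fin.cons_succ, map_zero, zero_mul,
    zero_add, Fin.val_zero, pow_zero, mul_one]
  ring

lemma coeff_monicPoly {d : ℕ} (c : Fin d → ℤ) (k : ℕ) :
    (monicPoly d c).coeff k =
      (if k = d then 1 else 0) + (if h : k < d then c ⟨k, h⟩ else 0) := by
  classical
  rw [monicPoly, coeff_add, coeff_X_pow, finset_sum_coeff]
  congr 1
  simp only [coeff_C_mul, coeff_X_pow]
  by_cases h : k < d
  · rw [dif_pos h]
    rw [Finset.sum_eq_single (⟨k, h⟩ : Fin d)]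
    · simp
    · intro b _ hb
      have : k ≠ (b : ℕ) := fun hh => hb (by ext; simp [hh])
      simp [this]
    · simp
  · rw [dif_neg h]
    apply Finset.sum_eq_zero
    intro i _
    have : k ≠ (i : ℕ) := fun hh => h (hh ▸ i.2)
    simp [this]

lemma coeff_monicPoly_self {d : ℕ} (hd : 1 ≤ d) (c : Fin d → ℤ) :
    (monicPoly d c).coeff d = 1 := by
  rw [coeff_monicPoly]; simp

lemma natDegree_derivative_monicPoly {d : ℕ} (hd : 2 ≤ d) (c : Fin d → ℤ) :
    (derivative (monicPoly d c)).natDegree = d - 1 := by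
  have h1 : (derivative (monicPoly d c)).coeff (d - 1) = d := by
    rw [coeff_derivative, show d - 1 + 1 = d by omega, coeff_monicPoly_self (by omega) c]
    push_cast; omega
  have h2 : (derivative (monicPoly d c)).natDegree ≤ d - 1 := by
    have := natDegree_derivative_le (monicPoly d c)
    rwa [natDegree_monicPoly (by omega) c] at this
  have h3 : d - 1 ≤ (derivative (monicPoly d c)).natDegree :=
    le_natDegree_of_ne_zero (by rw [h1]; exact_mod_cast (by omega : (d : ℤ) ≠ 0))
  omega

lemma resultant_eq_zero_of_disc_eq_zero {d : ℕ} (hd : 1 ≤ d) (c : Fin d → ℤ)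
    (h : disc (monicPoly d c) = 0) :
    _root_.resultant (monicPoly d c) (derivative (monicPoly d c)) = 0 := by
  rw [disc, (monic_monicPoly hd c).leadingCoeff, Int.ediv_one] at h
  rcases mul_eq_zero.mp h with h' | h'
  · exact absurd h' (pow_ne_zero _ (by norm_num))
  · exact h'

lemma common_root_of_resultant_eq_zero (f g : Polynomial ℤ)
    (hf : 0 < f.natDegree) (hg : 0 < g.natDegree) (h : _root_.resultant f g = 0) :
    ∃ z : ℂ, (f.map (Int.castRingHom ℂ)).eval z = 0 ∧
      (g.map (Int.castRingHom ℂ)).eval z = 0 := by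
  classical
  set φ : ℤ →+* ℂ := Int.castRingHom ℂ with hφ
  have hφinj : Function.Injective φ := fun a b => by simp [hφ]
  set df := f.natDegree with hdf
  set dg := g.natDegree with hdg
  set F := f.map φ with hF
  set G := g.map φ with hG
  have hFd : F.natDegree = df := natDegree_map_eq_of_injective hφinj f
  have hGd : G.natDegree = dg := natDegree_map_eq_of_injective hφinj g
  have hFne : F ≠ 0 := (Polynomial.map_ne_zero_iff hφinj).mpr
    (Polynomial.ne_zero_of_natDegree_gt hf)
  have hGne : G ≠ 0 := (Polynomial.map_ne_zero_iff hφinj).mpr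
    (Polynomial.ne_zero_of_natDegree_gt hg)
  set M : Matrix (Fin (df + dg)) (Fin (df + dg)) ℂ :=
    φ.mapMatrix (sylvesterMatrix f g) with hM
  have hdet : M.det = 0 := by
    rw [hM, ← RingHom.map_det]
    rw [_root_.resultant] at h
    rw [h, map_zero]
  obtain ⟨v, hv0, hv⟩ := Matrix.exists_vecMul_eq_zero_iff.mpr hdet
  set A : Polynomial ℂ := ∑ i : Fin (df + dg),
    if (i : ℕ) < dg then C (v i) * X ^ (dg - 1 - (i : ℕ)) else 0 with hA
  set B : Polynomial ℂ := ∑ i : Fin (df + dg),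
    if (i : ℕ) < dg then 0 else C (v i) * X ^ (df - 1 - ((i : ℕ) - dg)) with hB
  have hAd : A.natDegree ≤ dg - 1 := by
    refine natDegree_sum_le_of_forall_le _ _ fun i _ => ?_
    split
    · exact le_trans (natDegree_C_mul_le _ _) (le_trans (natDegree_X_pow_le _) (by omega))
    · simp
  have hBd : B.natDegree ≤ df - 1 := by
    refine natDegree_sum_le_of_forall_le _ _ fun i _ => ?_
    split
    · simp
    · exact le_trans (natDegree_C_mul_le _ _) (le_trans (natDegree_X_pow_le _) (by omega))
  -- the key identity
  have key : A * F + B * G = 0 := by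
    apply Polynomial.ext
    intro n
    rw [coeff_zero]
    by_cases hn : n < df + dg
    · have hvj := congrFun hv ⟨df + dg - 1 - n, by omega⟩
      simp only [Matrix.vecMul, dotProduct, Pi.zero_apply] at hvj
      rw [coeff_add, hA, hB, Finset.sum_mul, Finset.sum_mul, finset_sum_coeff,
        finset_sum_coeff, ← Finset.sum_add_distrib, ← hvj]
      refine Finset.sum_congr rfl fun i _ => ?_
      have hij : (i : ℕ) < df + dg := i.2
      have hMij : M i ⟨df + dg - 1 - n, by omega⟩ =
          if (i : ℕ) < dg then
            (if (i : ℕ) ≤ df + dg - 1 - n ∧ df + dg - 1 - n ≤ (i : ℕ) + df then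
              ((f.coeff (df + (i : ℕ) - (df + dg - 1 - n)) : ℤ) : ℂ) else 0)
          else
            (if (i : ℕ) - dg ≤ df + dg - 1 - n ∧ df + dg - 1 - n ≤ (i : ℕ) - dg + dg then
              ((g.coeff (dg + ((i : ℕ) - dg) - (df + dg - 1 - n)) : ℤ) : ℂ) else 0) := by
        rw [hM]
        simp only [RingHom.mapMatrix_apply, Matrix.map_apply, sylvesterMatrix, Matrix.of_apply]
        split_ifs <;> simp [hφ] <;> rfl
      rw [hMij]
      by_cases hi : (i : ℕ) < dg
      · rw [if_pos hi, if_pos hi, if_pos hi, zero_mul, coeff_zero, add_zero,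
          show C (v i) * X ^ (dg - 1 - (i : ℕ)) * F = C (v i) * (F * X ^ (dg - 1 - (i : ℕ))) by
            ring,
          coeff_C_mul, coeff_mul_X_pow']
        congr 1
        by_cases h1 : dg - 1 - (i : ℕ) ≤ n
        · rw [if_pos h1]
          by_cases h2 : (i : ℕ) ≤ df + dg - 1 - n
          · rw [if_pos ⟨h2, by omega⟩,
              show n - (dg - 1 - (i : ℕ)) = df + (i : ℕ) - (df + dg - 1 - n) by omega]
            rw [hF, coeff_map]
            simp [hφ]
          · rw [if_neg (by omega)]
            apply coeff_eq_zero_of_natDegree_lt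
            omega
        · rw [if_neg h1, if_neg (by omega)]
      · rw [if_neg hi, if_neg hi, if_neg hi, zero_mul, coeff_zero, zero_add,
          show C (v i) * X ^ (df - 1 - ((i : ℕ) - dg)) * G =
            C (v i) * (G * X ^ (df - 1 - ((i : ℕ) - dg))) by ring,
          coeff_C_mul, coeff_mul_X_pow']
        congr 1
        by_cases h1 : df - 1 - ((i : ℕ) - dg) ≤ n
        · rw [if_pos h1]
          by_cases h2 : (i : ℕ) - dg ≤ df + dg - 1 - n
          · rw [if_pos ⟨h2, by omega⟩,
              show n - (df - 1 - ((i : ℕ) - dg)) = dg + ((i : ℕ) - dg) - (df + dg - 1 - n) by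
                omega]
            rw [hG, coeff_map]
            simp [hφ]
          · rw [if_neg (by omega)]
            apply coeff_eq_zero_of_natDegree_lt
            omega
        · rw [if_neg h1, if_neg (by omega)]
    · apply coeff_eq_zero_of_natDegree_lt
      refine lt_of_le_of_lt (natDegree_add_le _ _) ?_
      have h1 : (A * F).natDegree ≤ dg - 1 + df :=
        le_trans natDegree_mul_le (by omega)
      have h2 : (B * G).natDegree ≤ df - 1 + dg :=
        le_trans natDegree_mul_le (by omega)
      have : dg - 1 + df < df + dg := by omega
      have : df - 1 + dg < df + dg := by omega
      simp only [sup_lt_iff]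
      omega
  -- A ≠ 0 or B ≠ 0
  have hAB : A ≠ 0 ∨ B ≠ 0 := by
    obtain ⟨i, hvi⟩ := Function.ne_iff.mp hv0
    simp only [Pi.zero_apply] at hvi
    by_cases hi : (i : ℕ) < dg
    · left
      have hcoeff : A.coeff (dg - 1 - (i : ℕ)) = v i := by
        rw [hA, finset_sum_coeff]
        rw [Finset.sum_eq_single i]
        · rw [if_pos hi, coeff_C_mul, coeff_X_pow, if_pos rfl, mul_one]
        · intro b _ hb
          by_cases hbi : (b : ℕ) < dg
          · rw [if_pos hbi, coeff_C_mul, coeff_X_pow, if_neg (by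
              intro hh
              exact hb (Fin.ext (by omega))), mul_zero]
          · rw [if_neg hbi, coeff_zero]
        · simp
      intro h0
      rw [h0, coeff_zero] at hcoeff
      exact hvi hcoeff.symm
    · right
      have hcoeff : B.coeff (df - 1 - ((i : ℕ) - dg)) = v i := by
        rw [hB, finset_sum_coeff]
        rw [Finset.sum_eq_single i]
        · rw [if_neg hi, coeff_C_mul, coeff_X_pow, if_pos rfl, mul_one]
        · intro b _ hb
          by_cases hbi : (b : ℕ) < dg
          · rw [if_pos hbi, coeff_zero]
          · rw [if_neg hbi, coeff_C_mul, coeff_X_pow, if_neg (by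
              intro hh
              have hb2 : (b : ℕ) < df + dg := b.2
              have hi2 : (i : ℕ) < df + dg := i.2
              exact hb (Fin.ext (by omega))), mul_zero]
        · simp
      intro h0
      rw [h0, coeff_zero] at hcoeff
      exact hvi hcoeff.symm
  -- endgame: no common root would give coprimality
  by_contra hno
  push_neg at hno
  have hcop : IsCoprime F G := by
    rw [← EuclideanDomain.gcd_isUnit_iff]
    set w := EuclideanDomain.gcd F G with hw
    have hwne : w ≠ 0 := fun h0 => hFne (EuclideanDomain.gcd_eq_zero_iff.mp h0).1
    rw [Polynomial.isUnit_iff_degree_eq_zero]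
    by_contra hdeg
    have hpos : 0 < w.degree := by
      rcases lt_or_eq_of_le (Polynomial.zero_le_degree_iff.mpr hwne) with h' | h'
      · exact h'
      · exact absurd h'.symm hdeg
    obtain ⟨z, hz⟩ := Complex.exists_root hpos
    exact hno z (eval_eq_zero_of_dvd_of_eval_eq_zero (EuclideanDomain.gcd_dvd_left F G) hz)
      (eval_eq_zero_of_dvd_of_eval_eq_zero (EuclideanDomain.gcd_dvd_right F G) hz)
  rcases hAB with hA0 | hB0
  · have hdvd : G ∣ A * F := ⟨-B, by linear_combination key⟩
    have : G ∣ A := (hcop.symm).dvd_of_dvd_mul_right hdvd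
    have := Polynomial.natDegree_le_of_dvd this hA0
    omega
  · have hdvd : F ∣ B * G := ⟨-A, by linear_combination key⟩
    have : F ∣ B := hcop.dvd_of_dvd_mul_right hdvd
    have := Polynomial.natDegree_le_of_dvd this hB0
    omega

open scoped Classical in
lemma card_disc_zero_fiber {n : ℕ} (hn : 1 ≤ n) (lo0 hi0 : ℤ) (t : Fin n → ℤ) :
    ((Finset.Icc lo0 hi0).filter fun x =>
      disc (monicPoly (n + 1) (Fin.cons x t)) = 0).card ≤ n := by
  classical
  set φ : ℤ →+* ℂ := Int.castRingHom ℂ with hφ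
  set W : Polynomial ℂ := (monicPoly (n + 1) (Fin.cons (0 : ℤ) t)).map φ with hW
  have hWd : W.natDegree = n + 1 := by
    rw [hW, natDegree_map_eq_of_injective (fun a b => by simp [hφ]),
      natDegree_monicPoly (by omega)]
  set D := derivative W with hD
  have hDcoeff : D.coeff n = (n : ℂ) + 1 := by
    rw [hD, coeff_derivative, hW, coeff_map, coeff_monicPoly_self (by omega)]
    simp [hφ]
  have hDne : D ≠ 0 := fun h0 => by
    rw [h0, coeff_zero] at hDcoeff
    have : ((n : ℂ) + 1) ≠ 0 := by
      have := Nat.cast_add_one_ne_zero (R := ℂ) n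
      push_cast at this
      exact this
    exact this hDcoeff.symm
  set P : ℤ → ℂ → Prop := fun x z => D.eval z = 0 ∧ (x : ℂ) = - W.eval z with hP
  have hex : ∀ x ∈ (Finset.Icc lo0 hi0).filter (fun x =>
      disc (monicPoly (n + 1) (Fin.cons x t)) = 0), ∃ z, P x z := by
    intro x hx
    rw [Finset.mem_filter] at hx
    have hf : 0 < (monicPoly (n + 1) (Fin.cons x t)).natDegree := by
      rw [natDegree_monicPoly (by omega)]; omega
    have hg : 0 < (derivative (monicPoly (n + 1) (Fin.cons x t))).natDegree := by
      rw [natDegree_derivative_monicPoly (by omega)]; omega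
    obtain ⟨z, hz1, hz2⟩ := common_root_of_resultant_eq_zero _ _ hf hg
      (resultant_eq_zero_of_disc_eq_zero (by omega) _ hx.2)
    have hmap : (monicPoly (n + 1) (Fin.cons x t)).map φ = W + C (x : ℂ) := by
      rw [monicPoly_cons, Polynomial.map_add, Polynomial.map_C]
      simp [hφ, hW]
    have hder : derivative (monicPoly (n + 1) (Fin.cons x t)) =
        derivative (monicPoly (n + 1) (Fin.cons (0 : ℤ) t)) := by
      rw [monicPoly_cons, derivative_add, derivative_C, add_zero]
    refine ⟨z, ?_, ?_⟩
    · show eval z D = 0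
      rw [hD, hW, Polynomial.derivative_map, ← hder]
      exact hz2
    · rw [hmap] at hz1
      simp only [eval_add, eval_C] at hz1
      linear_combination hz1
  set pick : ℤ → ℂ := fun x => if h : ∃ z, P x z then h.choose else 0 with hpick
  have hmem : ∀ x ∈ (Finset.Icc lo0 hi0).filter (fun x =>
      disc (monicPoly (n + 1) (Fin.cons x t)) = 0), pick x ∈ D.roots.toFinset := by
    intro x hx
    have h := hex x hx
    rw [hpick]
    simp only [dif_pos h]
    have := h.choose_spec
    rw [Multiset.mem_toFinset, Polynomial.mem_roots hDne]
    exact this.1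
  have hinj : Set.InjOn pick ((Finset.Icc lo0 hi0).filter (fun x =>
      disc (monicPoly (n + 1) (Fin.cons x t)) = 0) : Finset ℤ) := by
    intro x1 hx1 x2 hx2 heq
    have h1 := hex x1 (by simpa using hx1)
    have h2 := hex x2 (by simpa using hx2)
    rw [hpick] at heq
    simp only [dif_pos h1, dif_pos h2] at heq
    have e1 := h1.choose_spec.2
    have e2 := h2.choose_spec.2
    rw [heq] at e1
    have : (x1 : ℂ) = (x2 : ℂ) := by rw [e1, e2]
    exact_mod_cast this
  calc ((Finset.Icc lo0 hi0).filter fun x =>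
      disc (monicPoly (n + 1) (Fin.cons x t)) = 0).card
      ≤ D.roots.toFinset.card := Finset.card_le_card_of_injOn pick hmem hinj
    _ ≤ Multiset.card D.roots := Multiset.toFinset_card_le _
    _ ≤ D.natDegree := Polynomial.card_roots' D
    _ ≤ n := by
        have := natDegree_derivative_le W
        rw [hWd] at this
        exact le_trans this (by omega)

open scoped Classical in
lemma card_dvd_fiber (q : ℤ) (hq : 0 < q) (lo0 hi0 : ℤ) (hle : lo0 ≤ hi0) (s : ℤ) :
    |(((Finset.Icc lo0 hi0).filter fun x => q ∣ x + s).card : ℝ) -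
      (((Finset.Icc lo0 hi0).card : ℝ)) / (q : ℝ)| ≤ 1 := by
  have hset : (Finset.Icc lo0 hi0).filter (fun x => q ∣ x + s) =
      (Finset.Ioc (lo0 - 1) hi0).filter (fun x => x ≡ -s [ZMOD q]) := by
    ext x
    rw [Finset.mem_filter, Finset.mem_filter, Finset.mem_Icc, Finset.mem_Ioc]
    have hmod : (x ≡ -s [ZMOD q]) ↔ q ∣ x + s := by
      rw [Int.modEq_iff_dvd, show (-s) - x = -(x + s) by ring, dvd_neg]
    rw [hmod]
    constructor
    · rintro ⟨h1, h2⟩; exact ⟨⟨by omega, h1.2⟩, h2⟩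
    · rintro ⟨h1, h2⟩; exact ⟨⟨by omega, h1.2⟩, h2⟩
  have key := Int.Ioc_filter_modEq_card (lo0 - 1) hi0 hq (-s)
  set A : ℚ := (((lo0 - 1 : ℤ) : ℚ) - ((-s : ℤ) : ℚ)) / ((q : ℤ) : ℚ) with hA
  set B : ℚ := (((hi0 : ℤ) : ℚ) - ((-s : ℤ) : ℚ)) / ((q : ℤ) : ℚ) with hB
  have hq' : (0 : ℚ) < (q : ℚ) := by exact_mod_cast hq
  have hAB : A ≤ B := by
    rw [hA, hB]
    gcongr
    · push_cast; linarith [(by exact_mod_cast hle : ((lo0 : ℚ)) ≤ (hi0 : ℚ))]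
  have hmax : (⌊B⌋ - ⌊A⌋) ⊔ 0 = ⌊B⌋ - ⌊A⌋ :=
    max_eq_left (by simp [sub_nonneg]; exact Int.floor_le_floor hAB)
  rw [hmax] at key
  have hcard : (((Finset.Icc lo0 hi0).filter fun x => q ∣ x + s).card : ℤ) = ⌊B⌋ - ⌊A⌋ := by
    rw [hset]; exact_mod_cast key
  have hIccCard : (((Finset.Icc lo0 hi0).card : ℤ) : ℚ) = ((hi0 : ℚ)) - lo0 + 1 := by
    rw [Int.card_Icc, Int.toNat_of_nonneg (by omega)]
    push_cast; ring
  have hQ : |((((Finset.Icc lo0 hi0).filter fun x => q ∣ x + s).card : ℕ) : ℚ) -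
      (((Finset.Icc lo0 hi0).card : ℕ) : ℚ) / ((q : ℤ) : ℚ)| ≤ 1 := by
    have hc : ((((Finset.Icc lo0 hi0).filter fun x => q ∣ x + s).card : ℕ) : ℚ) =
        ((⌊B⌋ : ℚ)) - ((⌊A⌋ : ℚ)) := by exact_mod_cast hcard
    have hBA : B - A = (((Finset.Icc lo0 hi0).card : ℕ) : ℚ) / ((q : ℤ) : ℚ) := by
      rw [hA, hB, div_sub_div_same]
      congr 1
      rw [show (((Finset.Icc lo0 hi0).card : ℕ) : ℚ) = (((Finset.Icc lo0 hi0).card : ℤ) : ℚ)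
        by push_cast; ring, hIccCard]
      push_cast; ring
    rw [hc, ← hBA, abs_le]
    have f1 := Int.floor_le A
    have f2 := Int.floor_le B
    have f3 := Int.lt_floor_add_one A
    have f4 := Int.lt_floor_add_one B
    constructor <;> linarith
  exact_mod_cast hQ

lemma card_filter_piFinset_cons {n : ℕ} (S : Fin (n + 1) → Finset ℤ)
    (P : (Fin (n + 1) → ℤ) → Prop) [DecidablePred P] :
    ((Fintype.piFinset S).filter P).card =
      ∑ t ∈ Fintype.piFinset (fun i : Fin n => S i.succ),
        ((S 0).filter fun x => P (Fin.cons x t)).card := by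
  classical
  have him : (Fintype.piFinset S).filter P =
      (((S 0) ×ˢ Fintype.piFinset fun i : Fin n => S i.succ).filter
        fun pr => P (Fin.cons pr.1 pr.2)).image fun pr => Fin.cons pr.1 pr.2 := by
    ext c
    simp only [Finset.mem_filter, Fintype.mem_piFinset, Finset.mem_image, Finset.mem_product]
    constructor
    · rintro ⟨h1, h2⟩
      refine ⟨(c 0, Fin.tail c), ⟨⟨h1 0, fun i => h1 i.succ⟩, ?_⟩, ?_⟩
      · rw [Fin.cons_self_tail]; exact h2
      · rw [Fin.cons_self_tail]
    · rintro ⟨⟨x, t⟩, ⟨⟨hx, ht⟩, hP⟩, rfl⟩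
      refine ⟨fun i => ?_, hP⟩
      refine Fin.cases ?_ ?_ i
      · simpa using hx
      · intro j; simpa using ht j
  rw [him, Finset.card_image_of_injOn (fun pr1 _ pr2 _ h => by
    obtain ⟨h1, h2⟩ := Fin.cons_inj.mp h
    exact Prod.ext h1 h2)]
  rw [Finset.card_filter, Finset.sum_product_right]
  refine Finset.sum_congr rfl fun t _ => ?_
  rw [Finset.card_filter]


set_option maxHeartbeats 2000000 in
open scoped Classical in
/-- there is an absolute constant `C` such that for all `d, m ≥ 2`, every
tuple of nonempty intervals `I_j ⊆ [−m,m]`, every prime `p`, `k ≥ 1` and integer `r`,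
`| #{f ∈ E^{(1)}(m,d,I) : p^k ∣ f(r)} − |I|/p^k | ≤ C·d·|I|/min_j #I_j`. -/
theorem card_root_modpk_approx : ∃ C : ℝ, ∀ d m : ℕ, ∀ hd : 2 ≤ d, 2 ≤ m →
    ∀ lo hi : Fin d → ℤ,
      (∀ j, -(m : ℤ) ≤ lo j ∧ lo j ≤ hi j ∧ hi j ≤ (m : ℤ)) →
      ∀ p : ℕ, p.Prime → ∀ k : ℕ, 1 ≤ k → ∀ r : ℤ,
      |(((Eset d lo hi).filter fun c => (p : ℤ) ^ k ∣ (monicPoly d c).eval r).card : ℝ) -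
          (∏ j : Fin d, ((Finset.Icc (lo j) (hi j)).card : ℝ)) / (p : ℝ) ^ k| ≤
        C * d * (∏ j : Fin d, ((Finset.Icc (lo j) (hi j)).card : ℝ)) /
          ((Finset.univ.inf' ⟨⟨0, by omega⟩, Finset.mem_univ _⟩
            fun j : Fin d => (Finset.Icc (lo j) (hi j)).card : ℕ) : ℝ) := by
  classical
  refine ⟨1, ?_⟩
  intro d m hd hm lo hi hI p hp k hk r
  obtain ⟨n, rfl⟩ : ∃ n, d = n + 1 := ⟨d - 1, by omega⟩
  have hn : 1 ≤ n := by omega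
  set q : ℤ := (p : ℤ) ^ k with hqdef
  have hq : 0 < q := pow_pos (by exact_mod_cast hp.pos) k
  set L : Fin (n + 1) → ℕ := fun j => (Finset.Icc (lo j) (hi j)).card with hL
  have hLpos : ∀ j, 1 ≤ L j := fun j =>
    Finset.card_pos.mpr (Finset.nonempty_Icc.mpr (hI j).2.1)
  set Box := Fintype.piFinset fun j : Fin (n + 1) => Finset.Icc (lo j) (hi j) with hBox
  set Box' := Fintype.piFinset fun i : Fin n => Finset.Icc (lo i.succ) (hi i.succ) with hBox'
  set mn : ℕ := Finset.univ.inf' ⟨⟨0, by omega⟩, Finset.mem_univ _⟩ L with hmn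
  have hmnpos : 1 ≤ mn := Finset.le_inf' _ _ fun j _ => hLpos j
  have hmnle : mn ≤ L 0 := Finset.inf'_le _ (Finset.mem_univ 0)
  -- eval decomposition
  have hevalc : ∀ (x : ℤ) (t : Fin n → ℤ), (monicPoly (n + 1) (Fin.cons x t)).eval r
      = x + (r ^ (n + 1) + ∑ i : Fin n, t i * r ^ ((i : ℕ) + 1)) := by
    intro x t
    rw [eval_monicPoly, Fin.sum_univ_succ]
    simp only [Fin.cons_zero, Fin.cons_succ, Fin.val_succ, Fin.val_zero, pow_zero, mul_one]
    ring
  -- the three cardinalities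
  set T := Box.filter fun c => q ∣ (monicPoly (n + 1) c).eval r with hT
  set Z := Box.filter fun c => disc (monicPoly (n + 1) c) = 0 with hZ
  set S := (Eset (n + 1) lo hi).filter fun c => q ∣ (monicPoly (n + 1) c).eval r with hS
  have hSeq : S = Box.filter fun c =>
      disc (monicPoly (n + 1) c) ≠ 0 ∧ q ∣ (monicPoly (n + 1) c).eval r := by
    rw [hS, Eset, Finset.filter_filter]
  have hST : S.card ≤ T.card := by
    apply Finset.card_le_card
    rw [hSeq, hT]
    intro c hc
    rw [Finset.mem_filter] at hc ⊢
    exact ⟨hc.1, hc.2.2⟩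
  have hTS : T.card ≤ S.card + Z.card := by
    have hsplit := Finset.card_filter_add_card_filter_not
      (s := T) (p := fun c => disc (monicPoly (n + 1) c) ≠ 0)
    have h1 : T.filter (fun c => disc (monicPoly (n + 1) c) ≠ 0) = S := by
      rw [hSeq, hT, Finset.filter_filter]
      apply Finset.filter_congr
      intro c _
      tauto
    have h2 : (T.filter fun c => ¬ disc (monicPoly (n + 1) c) ≠ 0).card ≤ Z.card := by
      apply Finset.card_le_card
      rw [hT, hZ, Finset.filter_filter]
      intro c hc
      rw [Finset.mem_filter] at hc ⊢
      exact ⟨hc.1, not_not.mp hc.2.2⟩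
    rw [h1] at hsplit
    omega
  -- estimate for T
  have hTcard : T.card = ∑ t ∈ Box',
      ((Finset.Icc (lo 0) (hi 0)).filter fun x => q ∣ x +
        (r ^ (n + 1) + ∑ i : Fin n, t i * r ^ ((i : ℕ) + 1))).card := by
    rw [hT, hBox, card_filter_piFinset_cons]
    refine Finset.sum_congr rfl fun t _ => ?_
    congr 1
    ext x
    rw [Finset.mem_filter, Finset.mem_filter, hevalc]
  have hTapprox : |(T.card : ℝ) - (∏ j : Fin (n + 1), (L j : ℝ)) / (q : ℝ)| ≤
      (Box'.card : ℝ) := by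
    have hprod : (∏ j : Fin (n + 1), (L j : ℝ)) = (L 0 : ℝ) * (Box'.card : ℝ) := by
      simp only [hL, hBox', Fintype.card_piFinset, Fin.prod_univ_succ, Nat.cast_prod]
    have hTsum : (T.card : ℝ) = ∑ t ∈ Box',
        (((Finset.Icc (lo 0) (hi 0)).filter fun x => q ∣ x +
          (r ^ (n + 1) + ∑ i : Fin n, t i * r ^ ((i : ℕ) + 1))).card : ℝ) := by
      rw [hTcard, Nat.cast_sum]
    have hPsum : (∏ j : Fin (n + 1), (L j : ℝ)) / (q : ℝ) =
        ∑ _t ∈ Box', (L 0 : ℝ) / (q : ℝ) := by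
      rw [Finset.sum_const, hprod, nsmul_eq_mul]
      ring
    rw [hTsum, hPsum, ← Finset.sum_sub_distrib]
    refine le_trans (Finset.abs_sum_le_sum_abs _ _) ?_
    have hbound : ∀ t ∈ Box', |(((Finset.Icc (lo 0) (hi 0)).filter fun x => q ∣ x +
        (r ^ (n + 1) + ∑ i : Fin n, t i * r ^ ((i : ℕ) + 1))).card : ℝ) -
        (L 0 : ℝ) / (q : ℝ)| ≤ 1 := fun t _ =>
      card_dvd_fiber q hq (lo 0) (hi 0) (hI 0).2.1 _
    calc ∑ t ∈ Box', |(((Finset.Icc (lo 0) (hi 0)).filter fun x => q ∣ x +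
        (r ^ (n + 1) + ∑ i : Fin n, t i * r ^ ((i : ℕ) + 1))).card : ℝ) -
        (L 0 : ℝ) / (q : ℝ)|
        ≤ ∑ _t ∈ Box', (1 : ℝ) := Finset.sum_le_sum hbound
      _ = (Box'.card : ℝ) := by rw [Finset.sum_const, nsmul_eq_mul, mul_one]
  -- estimate for Z
  have hZcard : Z.card ≤ n * Box'.card := by
    rw [hZ, hBox, card_filter_piFinset_cons]
    calc ∑ t ∈ Box', ((Finset.Icc (lo 0) (hi 0)).filter fun x =>
          disc (monicPoly (n + 1) (Fin.cons x t)) = 0).card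
        ≤ ∑ _t ∈ Box', n := Finset.sum_le_sum fun t _ =>
          card_disc_zero_fiber hn (lo 0) (hi 0) t
      _ = Box'.card * n := by rw [Finset.sum_const, smul_eq_mul]
      _ = n * Box'.card := by ring
  -- assemble
  have hmain : |(S.card : ℝ) - (∏ j : Fin (n + 1), (L j : ℝ)) / (q : ℝ)| ≤
      ((n : ℝ) + 1) * (Box'.card : ℝ) := by
    have h1 : |(S.card : ℝ) - (T.card : ℝ)| ≤ (Z.card : ℝ) := by
      have a1 : (S.card : ℝ) ≤ (T.card : ℝ) := by exact_mod_cast hST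
      have a2 : (T.card : ℝ) ≤ (S.card : ℝ) + (Z.card : ℝ) := by exact_mod_cast hTS
      rw [abs_le]
      constructor <;> linarith
    calc |(S.card : ℝ) - (∏ j : Fin (n + 1), (L j : ℝ)) / (q : ℝ)|
        ≤ |(S.card : ℝ) - (T.card : ℝ)| +
          |(T.card : ℝ) - (∏ j : Fin (n + 1), (L j : ℝ)) / (q : ℝ)| :=
          abs_sub_le _ _ _
      _ ≤ (Z.card : ℝ) + (Box'.card : ℝ) := add_le_add h1 hTapprox
      _ ≤ (n : ℝ) * (Box'.card : ℝ) + (Box'.card : ℝ) := by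
          have : (Z.card : ℝ) ≤ (n : ℝ) * (Box'.card : ℝ) := by exact_mod_cast hZcard
          linarith
      _ = ((n : ℝ) + 1) * (Box'.card : ℝ) := by ring
  -- final comparison with RHS
  have hgoal : ((n : ℝ) + 1) * (Box'.card : ℝ) ≤
      1 * ((n + 1 : ℕ) : ℝ) * (∏ j : Fin (n + 1), (L j : ℝ)) / (mn : ℝ) := by
    have hprod : (∏ j : Fin (n + 1), (L j : ℝ)) = (L 0 : ℝ) * (Box'.card : ℝ) := by
      simp only [hL, hBox', Fintype.card_piFinset, Fin.prod_univ_succ, Nat.cast_prod]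
    have hmnR : (0 : ℝ) < (mn : ℝ) := by
      have : (1 : ℝ) ≤ (mn : ℝ) := by exact_mod_cast hmnpos
      linarith
    rw [hprod, le_div_iff₀ hmnR]
    have h0 : (mn : ℝ) ≤ (L 0 : ℝ) := by exact_mod_cast hmnle
    have h1 : (0 : ℝ) ≤ (Box'.card : ℝ) := Nat.cast_nonneg _
    have h2 : (0 : ℝ) ≤ (n : ℝ) + 1 := by positivity
    have hcast : ((n + 1 : ℕ) : ℝ) = (n : ℝ) + 1 := by push_cast; ring
    rw [hcast]
    nlinarith [mul_le_mul_of_nonneg_left h0 (mul_nonneg h2 h1)]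
  have hw : ((p : ℝ)) ^ k = ((q : ℤ) : ℝ) := by rw [hqdef]; push_cast; ring
  have hfinal := le_trans hmain hgoal
  simp only [hS] at hfinal
  simp only [hmn, hL] at hfinal
  rw [hw]
  exact hfinal
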